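/- arXiv:2202.05077 — 2 statements merged into one kernel-verified Lean document; each statement's English description precedes it below -/
import Mathlib

section
/- For every nonnegative integer k and real number a, one has (a+2)^2 * F(a+2,k) - (a+1)^2 * F(a,k) = G(a,k+1) - G(a,k), where F(a,k) = C(a,k)*C(-1-a,k)*C(2k,k)/4^k and G(a,k) = (a+2)(2a+3) * k/(4^{k-1}(a+1+k)) * C(2k-1,k-1)*C(a+1,k-1)*C(-3-a,k-1), with C(x,n) the generalized binomial coefficient x(x-1)...(x-n+1)/n!. -/
/-- Generalized binomial coefficient `C(x, k) = x(x-1)⋯(x-k+1)/k!` for real `x`. -/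
noncomputable def gbc (x : ℝ) (k : ℕ) : ℝ :=
  (∏ i ∈ Finset.range k, (x - i)) / (Nat.factorial k)
noncomputable def F (a : ℝ) (k : ℕ) : ℝ :=
  gbc a k * gbc (-1 - a) k * (Nat.choose (2 * k) k) / 4 ^ k
noncomputable def G (a : ℝ) (k : ℕ) : ℝ :=
  (a + 2) * (2 * a + 3) * k / (4 ^ (k - 1) * (a + 1 + k)) *
    (Nat.choose (2 * k - 1) (k - 1)) * gbc (a + 1) (k - 1) * gbc (-3 - a) (k - 1)

lemma key (x : ℝ) (m : ℕ) : ∀ n : ℕ, ∏ i ∈ Finset.range (m + n), (x - i)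
    = (∏ i ∈ Finset.range m, (x - i)) * ∏ i ∈ Finset.range n, (x - m - i) := by
  intro n
  induction n with
  | zero => simp
  | succ p ih =>
    rw [show m + (p + 1) = (m + p) + 1 by omega, Finset.prod_range_succ, ih,
      Finset.prod_range_succ]
    push_cast
    ring

set_option maxHeartbeats 1000000 in
theorem stmt0 (k : ℕ) (a : ℝ) (h1 : a + 1 + k ≠ 0) (h2 : a + 2 + k ≠ 0) :
    (a + 2) ^ 2 * F (a + 2) k - (a + 1) ^ 2 * F a k = G a (k + 1) - G a k := by
  rcases Nat.lt_or_ge k 3 with hk | hk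
  · have e1 : a + 1 + (k:ℝ) ≠ 0 := h1
    have e2 : a + 1 + ((k:ℝ) + 1) ≠ 0 := by intro h; apply h2; push_cast; linarith
    interval_cases k <;>
      (norm_num at e1 e2 ⊢; simp only [F, G, gbc];
       norm_num [Finset.prod_range_succ, Nat.choose];
       field_simp; ring)
  · obtain ⟨n, rfl⟩ : ∃ n, k = n + 3 := ⟨k - 3, by omega⟩

    have e1 : a + 1 + ((n:ℝ) + 3) ≠ 0 := by intro h; apply h1; push_cast; linarith
    have e2 : a + 1 + ((n:ℝ) + 4) ≠ 0 := by intro h; apply h2; push_cast; linarith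
    have t3 : (∏ i ∈ Finset.range (n+3), (a - (i:ℝ)))
        = (∏ i ∈ Finset.range n, (a - (i:ℝ))) * ((a - n) * (a - (n:ℝ) - 1) * (a - (n:ℝ) - 2)) := by
      rw [Finset.prod_range_succ, Finset.prod_range_succ, Finset.prod_range_succ]
      push_cast; ring
    have t6 : (∏ i ∈ Finset.range (n+3), (-3 - a - (i:ℝ)))
        = (∏ i ∈ Finset.range n, (-3 - a - (i:ℝ)))
          * ((-3 - a - n) * (-4 - a - (n:ℝ)) * (-5 - a - (n:ℝ))) := by
      rw [Finset.prod_range_succ, Finset.prod_range_succ, Finset.prod_range_succ]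
      push_cast; ring
    have t8 : (∏ i ∈ Finset.range (n+2), (-3 - a - (i:ℝ)))
        = (∏ i ∈ Finset.range n, (-3 - a - (i:ℝ))) * ((-3 - a - n) * (-4 - a - (n:ℝ))) := by
      rw [Finset.prod_range_succ, Finset.prod_range_succ]
      push_cast; ring
    have t1 : (∏ i ∈ Finset.range (n+3), (a + 2 - (i:ℝ)))
        = (a + 2) * (a + 1) * ((∏ i ∈ Finset.range n, (a - (i:ℝ))) * (a - n)) := by
      have h := key (a+2) 2 (n+1)
      rw [show 2 + (n+1) = n+3 by omega] at h
      have hfun : (∏ i ∈ Finset.range (n+1), (a + 2 - ((2:ℕ):ℝ) - (i:ℝ)))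
          = ∏ i ∈ Finset.range (n+1), (a - (i:ℝ)) :=
        Finset.prod_congr rfl fun i _ => by push_cast; ring
      rw [hfun] at h
      rw [h, Finset.prod_range_succ, Finset.prod_range_succ, Finset.prod_range_succ,
        Finset.prod_range_zero]
      push_cast; ring
    have t2 : (∏ i ∈ Finset.range (n+3), (-1 - (a + 2) - (i:ℝ)))
        = (∏ i ∈ Finset.range n, (-3 - a - (i:ℝ)))
          * ((-3 - a - n) * (-4 - a - (n:ℝ)) * (-5 - a - (n:ℝ))) := by
      rw [show (∏ i ∈ Finset.range (n+3), (-1 - (a + 2) - (i:ℝ)))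
          = ∏ i ∈ Finset.range (n+3), (-3 - a - (i:ℝ)) from
        Finset.prod_congr rfl fun i _ => by ring]
      exact t6
    have t4 : (∏ i ∈ Finset.range (n+3), (-1 - a - (i:ℝ)))
        = (-1 - a) * (-2 - a) * ((∏ i ∈ Finset.range n, (-3 - a - (i:ℝ))) * (-3 - a - n)) := by
      have h := key (-1 - a) 2 (n+1)
      rw [show 2 + (n+1) = n+3 by omega] at h
      have hfun : (∏ i ∈ Finset.range (n+1), (-1 - a - ((2:ℕ):ℝ) - (i:ℝ)))
          = ∏ i ∈ Finset.range (n+1), (-3 - a - (i:ℝ)) :=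
        Finset.prod_congr rfl fun i _ => by push_cast; ring
      rw [hfun] at h
      rw [h, Finset.prod_range_succ, Finset.prod_range_succ, Finset.prod_range_succ,
        Finset.prod_range_zero]
      push_cast; ring
    have t5 : (∏ i ∈ Finset.range (n+3), (a + 1 - (i:ℝ)))
        = (a + 1) * ((∏ i ∈ Finset.range n, (a - (i:ℝ))) * ((a - n) * (a - (n:ℝ) - 1))) := by
      have h := key (a+1) 1 (n+2)
      rw [show 1 + (n+2) = n+3 by omega] at h
      have hfun : (∏ i ∈ Finset.range (n+2), (a + 1 - ((1:ℕ):ℝ) - (i:ℝ)))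
          = ∏ i ∈ Finset.range (n+2), (a - (i:ℝ)) :=
        Finset.prod_congr rfl fun i _ => by push_cast; ring
      rw [hfun] at h
      rw [h, Finset.prod_range_succ, Finset.prod_range_succ, Finset.prod_range_succ,
        Finset.prod_range_zero]
      push_cast; ring
    have t7 : (∏ i ∈ Finset.range (n+2), (a + 1 - (i:ℝ)))
        = (a + 1) * ((∏ i ∈ Finset.range n, (a - (i:ℝ))) * (a - n)) := by
      have h := key (a+1) 1 (n+1)
      rw [show 1 + (n+1) = n+2 by omega] at h
      have hfun : (∏ i ∈ Finset.range (n+1), (a + 1 - ((1:ℕ):ℝ) - (i:ℝ)))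
          = ∏ i ∈ Finset.range (n+1), (a - (i:ℝ)) :=
        Finset.prod_congr rfl fun i _ => by push_cast; ring
      rw [hfun] at h
      rw [h, Finset.prod_range_succ, Finset.prod_range_succ, Finset.prod_range_zero]
      push_cast; ring
    have n2 : (2*n+6).choose (n+3) = 2 * (2*n+5).choose (n+2) := by
      have hs := Nat.choose_symm (show n+3 ≤ 2*n+5 by omega)
      rw [show 2*n+5-(n+3) = n+2 by omega] at hs
      have h' : (2*n+6).choose (n+3) = (2*n+5).choose (n+2) + (2*n+5).choose (n+3) := by
        rw [show 2*n+6 = (2*n+5)+1 by omega, show n+3 = (n+2)+1 by omega]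
        exact Nat.choose_succ_succ _ _
      omega
    have r1 : ((2:ℝ)*n+7) * ((2*n+6).choose (n+2) : ℝ) = ((2*n+7).choose (n+3) : ℝ) * ((n:ℝ)+3) := by
      have h := Nat.add_one_mul_choose_eq (2*n+6) (n+2)
      rw [show 2*n+6+1 = 2*n+7 by omega, show n+2+1 = n+3 by omega] at h
      exact_mod_cast congrArg (Nat.cast : ℕ → ℝ) h
    have r2 : ((2*n+6).choose (n+3) : ℝ) * ((n:ℝ)+3) = ((2*n+6).choose (n+2) : ℝ) * ((n:ℝ)+4) := by
      have h := Nat.choose_succ_right_eq (2*n+6) (n+2)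
      rw [show n+2+1 = n+3 by omega, show 2*n+6-(n+2) = n+4 by omega] at h
      exact_mod_cast congrArg (Nat.cast : ℕ → ℝ) h
    have hC2 : ((2*n+6).choose (n+3) : ℝ) = 2 * ((2*n+5).choose (n+2) : ℝ) := by
      exact_mod_cast congrArg (Nat.cast : ℕ → ℝ) n2
    have hC3 : ((2*n+7).choose (n+3) : ℝ)
        = 2 * ((2*n+5).choose (n+2) : ℝ) * (2*(n:ℝ)+7) / ((n:ℝ)+4) := by
      rw [eq_div_iff (show ((n:ℝ)+4) ≠ 0 by positivity)]
      have h3 : ((n:ℝ)+3) ≠ 0 := by positivity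
      apply mul_right_cancel₀ h3
      rw [hC2] at r2
      linear_combination (-((n:ℝ)+4)) * r1 + (-(2*(n:ℝ)+7)) * r2
    have hf3 : (((n+3).factorial : ℕ) : ℝ) = ((n+2).factorial : ℝ) * ((n:ℝ)+3) := by
      rw [show n+3 = (n+2)+1 by omega, Nat.factorial_succ]
      push_cast; ring
    have hfne : ((n+2).factorial : ℝ) ≠ 0 := by positivity
    simp only [F, G, gbc]
    simp only [show n+3-1 = n+2 from by omega, show 2*(n+3)-1 = 2*n+5 from by omega,
      show 2*(n+3) = 2*n+6 from by omega, show n+3+1-1 = n+3 from by omega,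
      show 2*(n+3+1)-1 = 2*n+7 from by omega, show n+3+1 = n+4 from by omega]
    push_cast
    rw [t1, t2, t3, t4, t5, t6, t7, t8, hC2, hC3, hf3]
    field_simp
    ring
end

section
/- For any positive integer n and real number a, Σ_{k=0}^{n-1} C(a,k)*C(-1-a,k)*C(2k,k)/4^k · (3k^2 - (2a^2+2a-1)k - a(a+1)) = 2n^3 · C(a,n)*C(-1-a,n)*C(2n,n)/4^n. -/
lemma gbc_succ (x : ℝ) (k : ℕ) : gbc x (k + 1) = gbc x k * (x - k) / (k + 1) := by
  have hk1 : ((k : ℝ) + 1) ≠ 0 := by positivity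
  have hf : ((Nat.factorial k : ℝ)) ≠ 0 := by positivity
  simp only [gbc, Finset.prod_range_succ, Nat.factorial_succ]
  push_cast
  field_simp

lemma step12 (a : ℝ) (k : ℕ) :
    gbc a k * gbc (-1 - a) k * (Nat.choose (2 * k) k) / 4 ^ k *
        (3 * (k : ℝ) ^ 2 - (2 * a ^ 2 + 2 * a - 1) * k - a * (a + 1)) =
      2 * ((k : ℝ) + 1) ^ 3 *
          (gbc a (k + 1) * gbc (-1 - a) (k + 1) * (Nat.choose (2 * (k + 1)) (k + 1)) / 4 ^ (k + 1))
        - 2 * (k : ℝ) ^ 3 * (gbc a k * gbc (-1 - a) k * (Nat.choose (2 * k) k) / 4 ^ k) := by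
  have hc := Nat.succ_mul_centralBinom_succ k
  simp only [Nat.centralBinom] at hc
  have hcR : ((k : ℝ) + 1) * (Nat.choose (2 * (k + 1)) (k + 1)) =
      2 * (2 * (k : ℝ) + 1) * (Nat.choose (2 * k) k) := by
    exact_mod_cast congrArg (Nat.cast : ℕ → ℝ) hc
  rw [gbc_succ, gbc_succ]
  have hk1 : ((k : ℝ) + 1) ≠ 0 := by positivity
  have h4 : (4 : ℝ) ^ k ≠ 0 := by positivity
  have key : ((Nat.choose (2 * (k + 1)) (k + 1)) : ℝ) =
      2 * (2 * (k : ℝ) + 1) * (Nat.choose (2 * k) k) / ((k : ℝ) + 1) := by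
    field_simp
    linarith [hcR]
  rw [key, pow_succ]
  field_simp
  ring

theorem stmt12 (n : ℕ) (hn : 0 < n) (a : ℝ) :
    ∑ k ∈ Finset.range n,
        gbc a k * gbc (-1 - a) k * (Nat.choose (2 * k) k) / 4 ^ k *
          (3 * (k : ℝ) ^ 2 - (2 * a ^ 2 + 2 * a - 1) * k - a * (a + 1)) =
      2 * (n : ℝ) ^ 3 * (gbc a n * gbc (-1 - a) n * (Nat.choose (2 * n) n) / 4 ^ n) := by
  have h := Finset.sum_range_sub
    (fun k => 2 * (k : ℝ) ^ 3 * (gbc a k * gbc (-1 - a) k * (Nat.choose (2 * k) k) / 4 ^ k)) n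
  calc ∑ k ∈ Finset.range n,
        gbc a k * gbc (-1 - a) k * (Nat.choose (2 * k) k) / 4 ^ k *
          (3 * (k : ℝ) ^ 2 - (2 * a ^ 2 + 2 * a - 1) * k - a * (a + 1))
      = ∑ k ∈ Finset.range n,
        (2 * ((k : ℝ) + 1) ^ 3 *
          (gbc a (k + 1) * gbc (-1 - a) (k + 1) * (Nat.choose (2 * (k + 1)) (k + 1)) / 4 ^ (k + 1))
        - 2 * (k : ℝ) ^ 3 * (gbc a k * gbc (-1 - a) k * (Nat.choose (2 * k) k) / 4 ^ k)) := by
        exact Finset.sum_congr rfl fun k _ => step12 a k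
    _ = 2 * (n : ℝ) ^ 3 * (gbc a n * gbc (-1 - a) n * (Nat.choose (2 * n) n) / 4 ^ n) := by
        simpa using h
end
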